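/- Let f : X → Y be a separated morphism of schemes and let U ⊆ X be an open dense subset. Assume that the image f(U) is open in Y and that the induced morphism U → f(U) is proper. Then f⁻¹(f(U)) = U. -/

import Mathlib

open AlgebraicGeometry CategoryTheory

lemma isProper_of_comp_of_isSeparated {X Y Z : Scheme} (f : X ⟶ Y) (g : Y ⟶ Z)
    [IsProper (f ≫ g)] [IsSeparated g] : IsProper f := by
  rw [← Limits.pullback.lift_snd (𝟙 _) f (Category.id_comp (f ≫ g))]
  have : MorphismProperty.IsStableUnderBaseChangeAlong @IsProper g :=
    ⟨fun pb h => MorphismProperty.IsStableUnderBaseChange.of_isPullback pb h⟩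
  have := MorphismProperty.pullback_snd (P := @IsProper) (f ≫ g) g inferInstance
  exact MorphismProperty.comp_mem _ _ _ inferInstance this

/-- **No extra fibre lemma.** Let `f : X ⟶ Y` be a separated morphism of schemes and
`U ⊆ X` an open dense subset. Assume that the image `f(U)` is open in `Y` (given as an
open `V` with underlying set `f '' U`) and that the induced morphism `U ⟶ V = f(U)`
(a morphism `g` with `g ≫ V.ι = U.ι ≫ f`) is proper. Then `f⁻¹(f(U)) = U`. -/
theorem preimage_image_eq_of_proper_over_image
    {X Y : Scheme} (f : X ⟶ Y) [IsSeparated f]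
    (U : X.Opens) (hU : Dense (U : Set X))
    (V : Y.Opens) (hV : (V : Set Y) = f.base '' (U : Set X))
    (g : (U : Scheme) ⟶ (V : Scheme)) (hg : g ≫ V.ι = U.ι ≫ f) [IsProper g] :
    f.base ⁻¹' (f.base '' (U : Set X)) = (U : Set X) := by
  set W : X.Opens := f ⁻¹ᵁ V with hW
  have hUW : U ≤ W := by
    intro x hx
    show f.base x ∈ V
    rw [← SetLike.mem_coe, hV]
    exact Set.mem_image_of_mem _ hx
  -- the restriction of `f` to `W ⟶ V`
  let f' : (W : Scheme) ⟶ (V : Scheme) := f.resLE V W le_rfl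
  have hf'ι : f' ≫ V.ι = W.ι ≫ f := Scheme.Hom.resLE_comp_ι f le_rfl
  haveI : IsSeparated f' := by
    have : IsSeparated (f' ≫ V.ι) := by
      rw [hf'ι]; infer_instance
    exact IsSeparated.of_comp f' V.ι
  -- the inclusion `U ⟶ W`
  let i : (U : Scheme) ⟶ (W : Scheme) := X.homOfLE hUW
  have hgi : g = i ≫ f' := by
    rw [← cancel_mono V.ι, hg, Category.assoc, hf'ι, ← Category.assoc,
      Scheme.homOfLE_ι]
  haveI : IsProper (i ≫ f') := hgi ▸ inferInstance
  haveI : IsProper i := isProper_of_comp_of_isSeparated i f'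
  -- the image of `i` is closed in `W`
  have hclosed : IsClosed (Set.range i.base) := by
    have := i.isClosedMap
    simpa using this _ isClosed_univ
  have hrange : Set.range i.base = Subtype.val ⁻¹' (U : Set X) := by
    ext x
    constructor
    · rintro ⟨y, rfl⟩
      show ((X.homOfLE hUW).base y).1 ∈ (U : Set X)
      have h := Scheme.homOfLE_apply hUW y
      exact h ▸ y.2
    · intro hx
      refine ⟨⟨x.1, hx⟩, ?_⟩
      apply Subtype.ext
      rw [Scheme.homOfLE_apply]
  -- density of `U` in `W`
  have hdense : Dense (Subtype.val ⁻¹' (U : Set X) : Set (W : Set X)) :=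
    hU.preimage W.2.isOpenMap_subtype_val
  have hWU : W ≤ U := by
    intro x hx
    have hmem : (⟨x, hx⟩ : (W : Set X)) ∈ Set.range i.base := by
      rw [← hclosed.closure_eq, hrange]
      exact hdense _
    rw [hrange] at hmem
    exact hmem
  have : (W : Set X) = (U : Set X) := le_antisymm hWU hUW
  rw [← hV]
  exact this
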